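/- Let λ = (λ_m)_{m≥1} be a nonincreasing sequence of nonnegative reals with λ_2 > 0, suppose Σ_m λ_m^{τ₀} < ∞ for some τ₀ ∈ (0,∞), let 1 ≤ a_d ≤ d for each d ≥ 1, b_d = d − a_d, and set ∇_d = {k ∈ ℕ^d : k_1 ≤ … ≤ k_{a_d}} (symmetric setting), with n(ε,d) = #{k ∈ ∇_d : ∏_{l=1}^d λ_{k_l} > ε²}. Then: (i) if λ_1 < 1, there exist C, p > 0 such that n(ε,d) ≤ C·ε^{−p} for all d ∈ ℕ and ε ∈ (0,1] (strong polynomial tractability); (ii) if λ_1 = 1 > λ_2 and sup_d b_d < ∞, the problem is strongly polynomially tractable; (iii) if λ_1 = 1 and there is c > 0 with b_d ≤ c·ln(d) for all d ≥ 2, then there exist C, p > 0, q ≥ 0 with n(ε,d) ≤ C·ε^{−p}·d^q for all d ∈ ℕ, ε ∈ (0,1] (polynomial tractability). In all cases the counted sets are asserted to be finite. -/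

import Mathlib

/-- Multi-indices in `ℕ^d` (entries `≥ 1`) that are nondecreasing along the first `a`
coordinates (the symmetric index set `∇_d`). -/
def symIdx (a d : ℕ) : Set (Fin d → ℕ) :=
  {k | (∀ i, 1 ≤ k i) ∧ ∀ i j : Fin d, i ≤ j → (j : ℕ) < a → k i ≤ k j}

namespace Stmt6Aux

open Finset
open scoped ENNReal

lemma tsum_shift (f : ℕ → ℝ≥0∞) (n : ℕ) :
    ∑' m, f m = ∑ i ∈ range n, f i + ∑' m, f (m + n) := by
  induction n with
  | zero => simp
  | succ n ih =>
    rw [ih, Finset.sum_range_succ]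
    have h : ∑' m, f (m + n) = f n + ∑' m, f (m + (n + 1)) := by
      have := tsum_eq_zero_add' (f := fun m => f (m + n)) ENNReal.summable
      simpa [add_assoc, Nat.add_comm 1 n] using this
    rw [h, ← add_assoc]

lemma tsum_pi_prod (g : ℕ → ℝ≥0∞) : ∀ d : ℕ,
    ∑' k : Fin d → ℕ, ∏ l, g (k l) = (∑' m, g m) ^ d
  | 0 => by
    rw [tsum_eq_single (fun i => i.elim0)
      (fun k hk => absurd (funext fun i => i.elim0) (Ne.symm hk))]
    simp
  | d + 1 => by
    rw [← (Fin.consEquiv (fun _ : Fin (d + 1) => ℕ)).tsum_eq, ENNReal.tsum_prod']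
    have h : ∀ (m : ℕ) (k : Fin d → ℕ),
        (∏ l, g ((Fin.consEquiv (fun _ : Fin (d+1) => ℕ)) (m, k) l))
          = g m * ∏ l, g (k l) := by
      intro m k
      have : (fun l => g ((Fin.cons m k : Fin (d+1) → ℕ) l))
          = Fin.cons (g m) (fun l => g (k l)) := by
        funext l
        exact congrFun (Fin.comp_cons g m k) l
      calc ∏ l, g ((Fin.cons m k : Fin (d+1) → ℕ) l)
          = ∏ l, (Fin.cons (g m) (fun l => g (k l)) : Fin (d+1) → ℝ≥0∞) l := by rw [this]
        _ = g m * ∏ l, g (k l) := by rw [Fin.prod_cons]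
    calc ∑' (m : ℕ) (k : Fin d → ℕ), ∏ l, g ((Fin.consEquiv (fun _ : Fin (d+1) => ℕ)) (m, k) l)
        = ∑' (m : ℕ) (k : Fin d → ℕ), g m * ∏ l, g (k l) := by
          congr 1; funext m; congr 1; funext k; exact h m k
      _ = ∑' (m : ℕ), g m * ∑' k : Fin d → ℕ, ∏ l, g (k l) := by
          congr 1; funext m; exact ENNReal.tsum_mul_left
      _ = (∑' m, g m) * (∑' k : Fin d → ℕ, ∏ l, g (k l)) := ENNReal.tsum_mul_right
      _ = (∑' m, g m) ^ (d + 1) := by rw [tsum_pi_prod g d, pow_succ, mul_comm]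

lemma indicator_ge_eq_prod (g : ℕ → ℝ≥0∞) (c d : ℕ) (k : Fin d → ℕ) :
    Set.indicator {k : Fin d → ℕ | ∀ l, c ≤ k l} (fun k => ∏ l, g (k l)) k
      = ∏ l, (if c ≤ k l then g (k l) else 0) := by
  by_cases h : ∀ l, c ≤ k l
  · rw [Set.indicator_of_mem (show k ∈ {k : Fin d → ℕ | ∀ l, c ≤ k l} from h)]
    exact Finset.prod_congr rfl fun l _ => by rw [if_pos (h l)]
  · rw [Set.indicator_of_notMem (show k ∉ {k : Fin d → ℕ | ∀ l, c ≤ k l} from h)]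
    push_neg at h
    obtain ⟨l, hl⟩ := h
    exact (Finset.prod_eq_zero (Finset.mem_univ l) (by rw [if_neg (not_le.mpr hl)])).symm

lemma tsum_ite_ge (g : ℕ → ℝ≥0∞) (c : ℕ) :
    ∑' m, (if c ≤ m then g m else 0) = ∑' m, g (m + c) := by
  rw [tsum_shift (fun m => if c ≤ m then g m else 0) c]
  have h1 : ∑ i ∈ range c, (if c ≤ i then g i else 0) = 0 :=
    Finset.sum_eq_zero fun i hi => by rw [if_neg (not_le.mpr (Finset.mem_range.mp hi))]
  rw [h1, zero_add]
  exact tsum_congr fun m => by rw [if_pos (Nat.le_add_left c m)]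

noncomputable def NS (g : ℕ → ℝ≥0∞) (a c : ℕ) : ℝ≥0∞ :=
  ∑' k : Fin a → ℕ,
    Set.indicator {k : Fin a → ℕ | (∀ l, c ≤ k l) ∧ Monotone k} (fun k => ∏ l, g (k l)) k

lemma NS_zero (g : ℕ → ℝ≥0∞) (c : ℕ) : NS g 0 c = 1 := by
  unfold NS
  rw [tsum_eq_single (fun i => i.elim0)
    (fun k hk => absurd (funext fun i => i.elim0) (Ne.symm hk))]
  rw [Set.indicator_of_mem (show _ ∈ {k : Fin 0 → ℕ | (∀ l, c ≤ k l) ∧ Monotone k} from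
    ⟨fun l => l.elim0, fun i _ _ => i.elim0⟩)]
  simp

lemma monotone_cons_iff {a : ℕ} (m : ℕ) (k : Fin a → ℕ) :
    Monotone (Fin.cons m k : Fin (a + 1) → ℕ) ↔ (∀ l, m ≤ k l) ∧ Monotone k := by
  constructor
  · intro h
    refine ⟨fun l => ?_, fun i j hij => ?_⟩
    · have := h (Fin.zero_le l.succ)
      simpa using this
    · have := h (show (i.succ : Fin (a+1)) ≤ j.succ from by
        rw [Fin.succ_le_succ_iff]; exact hij)
      simpa using this
  · rintro ⟨h1, h2⟩ i j hij
    rcases Fin.eq_zero_or_eq_succ i with rfl | ⟨i', rfl⟩ <;>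
      rcases Fin.eq_zero_or_eq_succ j with rfl | ⟨j', rfl⟩
    · exact le_rfl
    · simpa using h1 j'
    · exact absurd hij (by simp [Fin.le_def])
    · simpa using h2 (Fin.succ_le_succ_iff.mp hij)

lemma cons_mem_iff {a c : ℕ} (m : ℕ) (k : Fin a → ℕ) :
    ((Fin.cons m k : Fin (a+1) → ℕ) ∈
      {k : Fin (a+1) → ℕ | (∀ l, c ≤ k l) ∧ Monotone k})
      ↔ (c ≤ m ∧ ((∀ l, m ≤ k l) ∧ Monotone k)) := by
  rw [Set.mem_setOf_eq, monotone_cons_iff]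
  constructor
  · rintro ⟨hge, hm, hmono⟩
    exact ⟨by simpa using hge 0, hm, hmono⟩
  · rintro ⟨hcm, hm, hmono⟩
    refine ⟨fun l => ?_, hm, hmono⟩
    rcases Fin.eq_zero_or_eq_succ l with rfl | ⟨l', rfl⟩
    · simpa using hcm
    · simpa using le_trans hcm (hm l')

lemma NS_succ (g : ℕ → ℝ≥0∞) (a c : ℕ) :
    NS g (a + 1) c = ∑' m, (if c ≤ m then g m * NS g a m else 0) := by
  unfold NS
  rw [← (Fin.consEquiv (fun _ : Fin (a + 1) => ℕ)).tsum_eq, ENNReal.tsum_prod']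
  congr 1; funext m
  by_cases hm : c ≤ m
  · rw [if_pos hm]
    rw [← ENNReal.tsum_mul_left]
    congr 1; funext k
    have hce : (Fin.consEquiv fun _ : Fin (a+1) => ℕ) (m, k) = Fin.cons m k := rfl
    rw [hce]
    by_cases hk : (∀ l, m ≤ k l) ∧ Monotone k
    · rw [Set.indicator_of_mem ((cons_mem_iff m k).mpr ⟨hm, hk⟩),
        Set.indicator_of_mem
          (show k ∈ {k : Fin a → ℕ | (∀ l, m ≤ k l) ∧ Monotone k} from hk)]
      have : (fun l => g ((Fin.cons m k : Fin (a+1) → ℕ) l))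
          = Fin.cons (g m) (fun l => g (k l)) := by
        funext l; exact congrFun (Fin.comp_cons g m k) l
      calc ∏ l, g ((Fin.cons m k : Fin (a+1) → ℕ) l)
          = ∏ l, (Fin.cons (g m) (fun l => g (k l)) : Fin (a+1) → ℝ≥0∞) l := by rw [this]
        _ = g m * ∏ l, g (k l) := by rw [Fin.prod_cons]
    · rw [Set.indicator_of_notMem (fun hmem => hk ((cons_mem_iff m k).mp hmem).2),
        Set.indicator_of_notMem
          (show k ∉ {k : Fin a → ℕ | (∀ l, m ≤ k l) ∧ Monotone k} from hk), mul_zero]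
  · rw [if_neg hm]
    refine ENNReal.tsum_eq_zero.mpr fun k => ?_
    exact Set.indicator_of_notMem (fun hmem => hm ((cons_mem_iff m k).mp hmem).1) _

lemma NS_anti (g : ℕ → ℝ≥0∞) (a : ℕ) {c c' : ℕ} (h : c ≤ c') : NS g a c' ≤ NS g a c := by
  refine Summable.tsum_le_tsum (fun k => ?_) ENNReal.summable ENNReal.summable
  exact Set.indicator_le_indicator_of_subset
    (fun k hk => show (∀ l, c ≤ k l) ∧ Monotone k from
      ⟨fun l => le_trans h (hk.1 l), hk.2⟩) (fun k => zero_le) k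

lemma NS_le_pow (g : ℕ → ℝ≥0∞) (a c : ℕ) : NS g a c ≤ (∑' m, g (m + c)) ^ a := by
  have h1 : NS g a c ≤ ∑' k : Fin a → ℕ,
      Set.indicator {k : Fin a → ℕ | ∀ l, c ≤ k l} (fun k => ∏ l, g (k l)) k := by
    refine Summable.tsum_le_tsum (fun k => ?_) ENNReal.summable ENNReal.summable
    exact Set.indicator_le_indicator_of_subset (fun k hk => hk.1) (fun k => zero_le) k
  refine h1.trans (le_of_eq ?_)
  calc ∑' k : Fin a → ℕ,
      Set.indicator {k : Fin a → ℕ | ∀ l, c ≤ k l} (fun k => ∏ l, g (k l)) k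
      = ∑' k : Fin a → ℕ, ∏ l, (fun m => if c ≤ m then g m else 0) (k l) := by
        refine tsum_congr fun k => ?_
        exact indicator_ge_eq_prod g c a k
    _ = (∑' m, (if c ≤ m then g m else 0)) ^ a := by
          exact tsum_pi_prod (fun m => if c ≤ m then g m else 0) a
    _ = (∑' m, g (m + c)) ^ a := by rw [tsum_ite_ge]

lemma hockey (a : ℕ) : ∀ s : ℕ, ∑ i ∈ range (s + 1), (a + i).choose i = (a + s + 1).choose s
  | 0 => by simp
  | s + 1 => by
    rw [Finset.sum_range_succ, hockey a s]
    have : a + (s + 1) + 1 = (a + s + 1) + 1 := by omega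
    rw [this, Nat.choose_succ_succ (a + s + 1) s]
    rfl

lemma headsum (a c t : ℕ) (h1 : 1 ≤ c) (h2 : c ≤ t) :
    ∑ m ∈ range (t + 1), (if c ≤ m then (a + (t - m)).choose (t - m) else 0)
      = (a + (t - c) + 1).choose (t - c) := by
  rw [← Finset.sum_range_reflect]
  have e1 : ∀ i ∈ range (t + 1),
      (if c ≤ t + 1 - 1 - i then (a + (t - (t + 1 - 1 - i))).choose (t - (t + 1 - 1 - i)) else 0)
        = (if i ≤ t - c then (a + i).choose i else 0) := by
    intro i hi
    have hi' : i ≤ t := Nat.lt_succ_iff.mp (Finset.mem_range.mp hi)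
    have h3 : t + 1 - 1 - i = t - i := by omega
    rw [h3]
    by_cases hc : c ≤ t - i
    · rw [if_pos hc, if_pos (by omega), show t - (t - i) = i by omega]
    · rw [if_neg hc, if_neg (by omega)]
  rw [Finset.sum_congr rfl e1]
  rw [← Finset.sum_subset (Finset.range_subset_range.mpr (show t - c + 1 ≤ t + 1 by omega))
    (fun x hx hx' => by
      rw [if_neg]
      simp only [Finset.mem_range] at hx hx'
      omega)]
  rw [Finset.sum_congr rfl (fun i hi => if_pos (by simpa using Nat.lt_succ_iff.mp (Finset.mem_range.mp hi)))]
  exact hockey a (t - c)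

lemma geom_le_two {x : ℝ≥0∞} (hx : x ≤ 1 / 2) (a : ℕ) :
    ∑ j ∈ range (a + 1), x ^ j ≤ 2 := by
  calc ∑ j ∈ range (a + 1), x ^ j ≤ ∑' j : ℕ, x ^ j := ENNReal.sum_le_tsum _
    _ = (1 - x)⁻¹ := ENNReal.tsum_geometric x
    _ ≤ 2 := by
      rw [show (2 : ℝ≥0∞) = (1 / 2 : ℝ≥0∞)⁻¹ by norm_num]
      refine ENNReal.inv_le_inv.mpr ?_
      calc (1 : ℝ≥0∞) / 2 = 1 - 1 / 2 := by norm_num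
        _ ≤ 1 - x := tsub_le_tsub_left hx 1

lemma NS_bound (g : ℕ → ℝ≥0∞) (t : ℕ) (hg1 : ∀ m, 1 ≤ m → m ≤ t → g m ≤ 1)
    (hσ : ∑' m, g (m + (t + 1)) ≤ 1 / 2) :
    ∀ a c, 1 ≤ c → c ≤ t →
      NS g a c ≤ ((a + (t - c)).choose (t - c) : ℝ≥0∞) *
        ∑ j ∈ range (a + 1), (∑' m, g (m + (t + 1))) ^ j := by
  set σ : ℝ≥0∞ := ∑' m, g (m + (t + 1)) with hσdef
  intro a
  induction a with
  | zero =>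
    intro c h1 h2
    rw [NS_zero]
    simp [Nat.choose_self]
  | succ a ih =>
    intro c h1 h2
    rw [NS_succ, tsum_shift _ (t + 1)]
    have tail : ∑' m, (if c ≤ m + (t + 1) then g (m + (t + 1)) * NS g a (m + (t + 1)) else 0)
        ≤ σ ^ (a + 1) := by
      have hterm : ∀ m, (if c ≤ m + (t + 1) then g (m + (t + 1)) * NS g a (m + (t + 1)) else 0)
          ≤ g (m + (t + 1)) * σ ^ a := by
        intro m
        rw [if_pos (by omega)]
        refine mul_le_mul_right ?_ _
        exact le_trans (NS_anti g a (by omega : t + 1 ≤ m + (t + 1))) (NS_le_pow g a (t + 1))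
      calc ∑' m, (if c ≤ m + (t + 1) then g (m + (t + 1)) * NS g a (m + (t + 1)) else 0)
          ≤ ∑' m, g (m + (t + 1)) * σ ^ a :=
            Summable.tsum_le_tsum hterm ENNReal.summable ENNReal.summable
        _ = σ * σ ^ a := ENNReal.tsum_mul_right
        _ = σ ^ (a + 1) := (pow_succ' σ a).symm
    have head : ∑ m ∈ range (t + 1), (if c ≤ m then g m * NS g a m else 0)
        ≤ ((a + (t - c) + 1).choose (t - c) : ℝ≥0∞) *
          ∑ j ∈ range (a + 1), σ ^ j := by
      have hterm : ∀ m ∈ range (t + 1), (if c ≤ m then g m * NS g a m else 0)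
          ≤ (if c ≤ m then ((a + (t - m)).choose (t - m) : ℝ≥0∞) else 0) *
            ∑ j ∈ range (a + 1), σ ^ j := by
        intro m hm
        by_cases hcm : c ≤ m
        · rw [if_pos hcm, if_pos hcm]
          have hm' : m ≤ t := by simpa [Nat.lt_succ_iff] using Finset.mem_range.mp hm
          calc g m * NS g a m ≤ 1 * NS g a m :=
              mul_le_mul_left (hg1 m (le_trans h1 hcm) hm') _
            _ = NS g a m := one_mul _
            _ ≤ ((a + (t - m)).choose (t - m) : ℝ≥0∞) * ∑ j ∈ range (a + 1), σ ^ j :=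
              ih m (le_trans h1 hcm) hm'
        · rw [if_neg hcm, if_neg hcm, zero_mul]
      calc ∑ m ∈ range (t + 1), (if c ≤ m then g m * NS g a m else 0)
          ≤ ∑ m ∈ range (t + 1), (if c ≤ m then ((a + (t - m)).choose (t - m) : ℝ≥0∞) else 0) *
              ∑ j ∈ range (a + 1), σ ^ j := Finset.sum_le_sum hterm
        _ = (∑ m ∈ range (t + 1), (if c ≤ m then ((a + (t - m)).choose (t - m) : ℝ≥0∞) else 0)) *
              ∑ j ∈ range (a + 1), σ ^ j := by rw [Finset.sum_mul]
        _ = ((a + (t - c) + 1).choose (t - c) : ℝ≥0∞) * ∑ j ∈ range (a + 1), σ ^ j := by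
            congr 1
            have : ∑ m ∈ range (t + 1), (if c ≤ m then ((a + (t - m)).choose (t - m) : ℝ≥0∞) else 0)
                = ((∑ m ∈ range (t + 1), if c ≤ m then (a + (t - m)).choose (t - m) else 0 : ℕ) : ℝ≥0∞) := by
              push_cast
              exact Finset.sum_congr rfl fun m _ => by split <;> simp
            rw [this, headsum a c t h1 h2]
    calc ∑ m ∈ range (t + 1), (if c ≤ m then g m * NS g a m else 0)
          + ∑' m, (if c ≤ m + (t + 1) then g (m + (t + 1)) * NS g a (m + (t + 1)) else 0)
        ≤ ((a + (t - c) + 1).choose (t - c) : ℝ≥0∞) * ∑ j ∈ range (a + 1), σ ^ j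
          + σ ^ (a + 1) := add_le_add head tail
      _ ≤ ((a + 1 + (t - c)).choose (t - c) : ℝ≥0∞) * ∑ j ∈ range (a + 1 + 1), σ ^ j := by
          rw [show ∑ j ∈ range (a + 1 + 1), σ ^ j
                = ∑ j ∈ range (a + 1), σ ^ j + σ ^ (a + 1) from Finset.sum_range_succ _ _,
            mul_add, show a + 1 + (t - c) = a + (t - c) + 1 by omega]
          have hC : (1 : ℝ≥0∞) ≤ ((a + (t - c) + 1).choose (t - c) : ℝ≥0∞) := by
            exact_mod_cast Nat.one_le_iff_ne_zero.mpr (Nat.choose_pos (by omega)).ne'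
          have hσC : σ ^ (a + 1) ≤ ((a + (t - c) + 1).choose (t - c) : ℝ≥0∞) * σ ^ (a + 1) :=
            le_mul_of_one_le_left zero_le hC
          exact add_le_add le_rfl hσC
  
lemma NS_one (g : ℕ → ℝ≥0∞) (t : ℕ) (hg1 : ∀ m, 1 ≤ m → m ≤ t → g m ≤ 1)
    (hσ : ∑' m, g (m + (t + 1)) ≤ 1 / 2) (a : ℕ) :
    NS g a 1 ≤ 2 * ((a + (t - 1)).choose (t - 1) : ℝ≥0∞) := by
  rcases Nat.eq_zero_or_pos t with rfl | ht
  · have h1 : NS g a 1 ≤ (∑' m, g (m + 1)) ^ a := NS_le_pow g a 1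
    have h2 : (∑' m, g (m + 1)) ^ a ≤ 1 := by
      refine pow_le_one' ?_ a
      exact le_trans hσ (by norm_num)
    have h3 : (2 : ℝ≥0∞) * ((a + (0 - 1)).choose (0 - 1) : ℝ≥0∞) = 2 := by simp
    rw [h3]
    exact le_trans h1 (le_trans h2 one_le_two)
  · calc NS g a 1 ≤ ((a + (t - 1)).choose (t - 1) : ℝ≥0∞) *
        ∑ j ∈ range (a + 1), (∑' m, g (m + (t + 1))) ^ j := NS_bound g t hg1 hσ a 1 le_rfl ht
      _ ≤ ((a + (t - 1)).choose (t - 1) : ℝ≥0∞) * 2 := mul_le_mul_right (geom_le_two hσ a) _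
      _ = 2 * ((a + (t - 1)).choose (t - 1) : ℝ≥0∞) := mul_comm _ _

lemma prod_split {M : Type*} [CommMonoid M] {a d : ℕ} (had : a ≤ d) (F : Fin d → M) :
    ∏ l, F l = (∏ i : Fin a, F (Fin.castLE had i)) *
      ∏ j : Fin (d - a), F ⟨a + (j : ℕ), by omega⟩ := by
  set K : ℕ → M := fun i => if h : i < d then F ⟨i, h⟩ else 1 with hK
  have h1 : ∏ l, F l = ∏ i ∈ range d, K i := by
    rw [← Fin.prod_univ_eq_prod_range K d]
    exact Finset.prod_congr rfl fun l _ => by simp [hK, l.isLt]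
  have hd : d = a + (d - a) := by omega
  rw [h1]
  rw [show range d = range (a + (d - a)) by rw [← hd]]
  rw [Finset.prod_range_add K a (d - a)]
  congr 1
  · rw [← Fin.prod_univ_eq_prod_range]
    refine Finset.prod_congr rfl fun i _ => ?_
    have : ((i : ℕ) : ℕ) < d := by omega
    simp only [hK, dif_pos this]
    exact congrArg F (Fin.ext rfl)
  · rw [← Fin.prod_univ_eq_prod_range (fun j => K (a + j)) (d - a)]
    refine Finset.prod_congr rfl fun j _ => ?_
    have : a + (j : ℕ) < d := by omega
    simp only [hK, dif_pos this]

lemma master (g : ℕ → ℝ≥0∞) (t : ℕ) (hg1 : ∀ m, 1 ≤ m → m ≤ t → g m ≤ 1)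
    (hσ : ∑' m, g (m + (t + 1)) ≤ 1 / 2) {a d : ℕ} (had : a ≤ d) :
    ∑' k : Fin d → ℕ, Set.indicator (symIdx a d) (fun k => ∏ l, g (k l)) k
      ≤ 2 * ((a + (t - 1)).choose (t - 1) : ℝ≥0∞) * (∑' m, g (m + 1)) ^ (d - a) := by
  set Φ : (Fin d → ℕ) → (Fin a → ℕ) × (Fin (d - a) → ℕ) := fun k =>
    (fun i => k (Fin.castLE had i), fun j => k ⟨a + (j : ℕ), by omega⟩) with hΦ
  have hinj : Function.Injective Φ := by
    intro k k' h
    have h1 := congrArg Prod.fst h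
    have h2 := congrArg Prod.snd h
    simp only [hΦ] at h1 h2
    funext l
    by_cases hl : (l : ℕ) < a
    · have := congrFun h1 ⟨l, hl⟩
      simpa [Fin.castLE, Fin.eta] using this
    · have hl2 : (l : ℕ) - a < d - a := by omega
      have := congrFun h2 ⟨(l : ℕ) - a, hl2⟩
      have he : (⟨a + ((l : ℕ) - a), by omega⟩ : Fin d) = l := by
        ext; simp; omega
      rwa [he] at this
  set G : (Fin a → ℕ) × (Fin (d - a) → ℕ) → ℝ≥0∞ := fun p =>
    (Set.indicator {u : Fin a → ℕ | (∀ l, 1 ≤ u l) ∧ Monotone u}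
      (fun u => ∏ i, g (u i)) p.1) * ∏ j, (if 1 ≤ p.2 j then g (p.2 j) else 0) with hG
  have hle : ∀ k, Set.indicator (symIdx a d) (fun k => ∏ l, g (k l)) k ≤ G (Φ k) := by
    intro k
    by_cases hk : k ∈ symIdx a d
    · rw [Set.indicator_of_mem hk]
      have hu : (Φ k).1 ∈ {u : Fin a → ℕ | (∀ l, 1 ≤ u l) ∧ Monotone u} := by
        refine ⟨fun l => hk.1 _, fun i j hij => ?_⟩
        exact hk.2 (Fin.castLE had i) (Fin.castLE had j) hij j.isLt
      rw [hG]
      simp only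
      rw [Set.indicator_of_mem hu]
      have hv : ∀ j : Fin (d - a), (if 1 ≤ (Φ k).2 j then g ((Φ k).2 j) else 0)
          = g ((Φ k).2 j) := fun j => if_pos (hk.1 _)
      rw [Finset.prod_congr rfl fun j _ => hv j]
      exact le_of_eq (prod_split had (fun l => g (k l)))
    · rw [Set.indicator_of_notMem hk]
      exact zero_le
  calc ∑' k : Fin d → ℕ, Set.indicator (symIdx a d) (fun k => ∏ l, g (k l)) k
      ≤ ∑' p : (Fin a → ℕ) × (Fin (d - a) → ℕ), G p :=
        Summable.tsum_le_tsum_of_inj Φ hinj (fun _ _ => zero_le) hle ENNReal.summable ENNReal.summable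
    _ = NS g a 1 * (∑' m, g (m + 1)) ^ (d - a) := by
        rw [ENNReal.tsum_prod']
        calc ∑' (u : Fin a → ℕ) (v : Fin (d - a) → ℕ), G (u, v)
            = ∑' u : Fin a → ℕ,
                (Set.indicator {u : Fin a → ℕ | (∀ l, 1 ≤ u l) ∧ Monotone u}
                  (fun u => ∏ i, g (u i)) u) *
                ∑' v : Fin (d - a) → ℕ, ∏ j, (if 1 ≤ v j then g (v j) else 0) := by
              refine tsum_congr fun u => ?_
              have hGu : ∀ v : Fin (d - a) → ℕ, G (u, v) =
                  (Set.indicator {u : Fin a → ℕ | (∀ l, 1 ≤ u l) ∧ Monotone u}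
                    (fun u => ∏ i, g (u i)) u) * ∏ j, (if 1 ≤ v j then g (v j) else 0) :=
                fun v => rfl
              rw [tsum_congr hGu, ENNReal.tsum_mul_left]
          _ = NS g a 1 * (∑' m, g (m + 1)) ^ (d - a) := by
              rw [ENNReal.tsum_mul_right]
              congr 1
              calc ∑' v : Fin (d - a) → ℕ, ∏ j, (if 1 ≤ v j then g (v j) else 0)
                  = (∑' m, (if 1 ≤ m then g m else 0)) ^ (d - a) := by
                    exact tsum_pi_prod (fun m => if 1 ≤ m then g m else 0) (d - a)
                _ = (∑' m, g (m + 1)) ^ (d - a) := by rw [tsum_ite_ge]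
    _ ≤ 2 * ((a + (t - 1)).choose (t - 1) : ℝ≥0∞) * (∑' m, g (m + 1)) ^ (d - a) :=
        mul_le_mul_left (NS_one g t hg1 hσ a) _

lemma cheb {α : Type*} (S : Set α) (f : α → ℝ≥0∞) (c M : ℝ≥0∞) (hc : c ≠ 0) (hM : M ≠ ⊤)
    (hle : ∑' x, S.indicator f x ≤ M) :
    {x ∈ S | c < f x}.Finite ∧ ({x ∈ S | c < f x}.ncard : ℝ≥0∞) * c ≤ M := by
  set T := {x ∈ S | c < f x} with hT
  have key : ∀ F : Finset α, ↑F ⊆ T → (F.card : ℝ≥0∞) * c ≤ M := by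
    intro F hF
    calc (F.card : ℝ≥0∞) * c = ∑ _x ∈ F, c := by rw [Finset.sum_const, nsmul_eq_mul]
      _ ≤ ∑ x ∈ F, S.indicator f x := Finset.sum_le_sum fun x hx => by
          have hx' := hF hx
          rw [Set.indicator_of_mem hx'.1]
          exact (hx'.2).le
      _ ≤ ∑' x, S.indicator f x := ENNReal.sum_le_tsum F
      _ ≤ M := hle
  have hfin : T.Finite := by
    by_contra hinf
    replace hinf : T.Infinite := hinf
    obtain ⟨nn, hnn⟩ : ∃ nn : ℕ, M < nn * c := by
      rcases eq_or_ne c ⊤ with rfl | hctop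
      · exact ⟨1, by simpa using hM.lt_top⟩
      · obtain ⟨nn, h⟩ := ENNReal.exists_nat_gt (ENNReal.div_lt_top hM hc).ne
        exact ⟨nn, by rwa [ENNReal.div_lt_iff (Or.inl hc) (Or.inl hctop)] at h⟩
    obtain ⟨u, huT, hufin, hucard⟩ := hinf.exists_subset_ncard_eq nn
    have hkey := key hufin.toFinset (by simpa using huT)
    rw [show hufin.toFinset.card = u.ncard from (Set.ncard_eq_toFinset_card u hufin).symm,
      hucard] at hkey
    exact absurd hkey (not_le.mpr hnn)
  refine ⟨hfin, ?_⟩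
  have hkey := key hfin.toFinset (by simp)
  rwa [show hfin.toFinset.card = T.ncard from (Set.ncard_eq_toFinset_card T hfin).symm] at hkey

lemma glue (Λ : ℕ → ℝ) (hnn : ∀ m, 0 ≤ Λ m)
    (hmono : ∀ m n : ℕ, 1 ≤ m → m ≤ n → Λ n ≤ Λ m)
    (τ₀ : ℝ) (hτ₀ : 0 < τ₀) (hsum : Summable (fun m : ℕ => Λ (m + 1) ^ τ₀))
    (t : ℕ) (hΛ1 : ∀ m, 1 ≤ m → m ≤ t → Λ m ≤ 1) (hΛt : Λ (t + 1) < 1) :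
    ∃ p : ℝ, 0 < p ∧ ∀ a d : ℕ, 1 ≤ a → a ≤ d → ∀ ε : ℝ, 0 < ε → ε ≤ 1 →
      {k : Fin d → ℕ | k ∈ symIdx a d ∧ ε ^ 2 < ∏ l, Λ (k l)}.Finite ∧
      ({k : Fin d → ℕ | k ∈ symIdx a d ∧ ε ^ 2 < ∏ l, Λ (k l)}.ncard : ℝ) ≤
        ε ^ (-p) * (2 * ((a + (t - 1)).choose (t - 1) : ℝ) * ((t : ℝ) + 1) ^ (d - a)) := by
  -- the ℓ_τ₀ sum, in ℝ≥0∞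
  set T0 : ℝ≥0∞ := ∑' m : ℕ, ENNReal.ofReal (Λ (m + 1) ^ τ₀) with hT0def
  have hT0 : T0 ≠ ⊤ := by
    rw [hT0def, ← ENNReal.ofReal_tsum_of_nonneg
      (fun m => Real.rpow_nonneg (hnn _) _) hsum]
    exact ENNReal.ofReal_ne_top
  -- choose n so that the tail is at most 1/2
  obtain ⟨n, hn⟩ : ∃ n : ℕ, ENNReal.ofReal (Λ (t + 1) ^ n) * T0 ≤ 1 / 2 := by
    have hr0 : 0 ≤ Λ (t + 1) := hnn _
    have htend : Filter.Tendsto (fun n : ℕ => Λ (t + 1) ^ n) Filter.atTop (nhds 0) :=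
      tendsto_pow_atTop_nhds_zero_of_lt_one hr0 hΛt
    have hδ : (0 : ℝ) < (1 / 2) / (T0.toReal + 1) := by positivity
    obtain ⟨n, hn⟩ := (htend.eventually (eventually_lt_nhds hδ)).exists
    refine ⟨n, ?_⟩
    have h1 : ENNReal.ofReal (Λ (t + 1) ^ n) ≤ ENNReal.ofReal ((1 / 2) / (T0.toReal + 1)) :=
      ENNReal.ofReal_le_ofReal hn.le
    have h2 : T0 = ENNReal.ofReal T0.toReal := (ENNReal.ofReal_toReal hT0).symm
    calc ENNReal.ofReal (Λ (t + 1) ^ n) * T0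
        ≤ ENNReal.ofReal ((1 / 2) / (T0.toReal + 1)) * ENNReal.ofReal T0.toReal := by
          rw [← h2]; exact mul_le_mul_left h1 _
      _ = ENNReal.ofReal ((1 / 2) / (T0.toReal + 1) * T0.toReal) :=
          (ENNReal.ofReal_mul (by positivity)).symm
      _ ≤ ENNReal.ofReal (1 / 2) := by
          refine ENNReal.ofReal_le_ofReal ?_
          have hx : 0 ≤ T0.toReal := ENNReal.toReal_nonneg
          rw [div_mul_eq_mul_div, div_le_iff₀ (by positivity)]
          nlinarith
      _ ≤ 1 / 2 := by
          rw [ENNReal.ofReal_div_of_pos (by norm_num)]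
          simp
  set τ : ℝ := τ₀ + n with hτdef
  have hτpos : 0 < τ := by positivity
  set g : ℕ → ℝ≥0∞ := fun m => ENNReal.ofReal (Λ m ^ τ) with hgdef
  have hg1 : ∀ m, 1 ≤ m → m ≤ t → g m ≤ 1 := by
    intro m h1 h2
    rw [hgdef]
    simp only
    rw [show (1 : ℝ≥0∞) = ENNReal.ofReal 1 by simp]
    exact ENNReal.ofReal_le_ofReal (Real.rpow_le_one (hnn m) (hΛ1 m h1 h2) hτpos.le)
  have hσ : ∑' m, g (m + (t + 1)) ≤ 1 / 2 := by
    have key : ∀ m : ℕ, g (m + (t + 1)) ≤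
        ENNReal.ofReal (Λ (t + 1) ^ n) * ENNReal.ofReal (Λ (m + t + 1) ^ τ₀) := by
      intro m
      rw [hgdef]
      simp only
      rw [← ENNReal.ofReal_mul (pow_nonneg (hnn _) n)]
      refine ENNReal.ofReal_le_ofReal ?_
      have hmt : Λ (m + (t + 1)) = Λ (m + t + 1) := by ring_nf
      rw [hmt]
      have h1 : Λ (m + t + 1) ^ τ = Λ (m + t + 1) ^ τ₀ * Λ (m + t + 1) ^ (n : ℕ) := by
        rw [hτdef, Real.rpow_add' (hnn _) (by positivity), Real.rpow_natCast]
      rw [h1]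
      have h2 : Λ (m + t + 1) ^ (n : ℕ) ≤ Λ (t + 1) ^ (n : ℕ) :=
        pow_le_pow_left₀ (hnn _) (hmono (t + 1) (m + t + 1) (by omega) (by omega)) n
      calc Λ (m + t + 1) ^ τ₀ * Λ (m + t + 1) ^ (n : ℕ)
          ≤ Λ (m + t + 1) ^ τ₀ * Λ (t + 1) ^ (n : ℕ) := by
            refine mul_le_mul_of_nonneg_left h2 (Real.rpow_nonneg (hnn _) _)
        _ = Λ (t + 1) ^ (n : ℕ) * Λ (m + t + 1) ^ τ₀ := mul_comm _ _
    calc ∑' m, g (m + (t + 1))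
        ≤ ∑' m, ENNReal.ofReal (Λ (t + 1) ^ n) * ENNReal.ofReal (Λ (m + t + 1) ^ τ₀) :=
          Summable.tsum_le_tsum key ENNReal.summable ENNReal.summable
      _ = ENNReal.ofReal (Λ (t + 1) ^ n) *
            ∑' m, ENNReal.ofReal (Λ ((m + t) + 1) ^ τ₀) := ENNReal.tsum_mul_left
      _ ≤ ENNReal.ofReal (Λ (t + 1) ^ n) * T0 := by
          refine mul_le_mul_right ?_ _
          rw [hT0def]
          exact ENNReal.tsum_comp_le_tsum_of_injective
            (add_left_injective t)
            (fun m => ENNReal.ofReal (Λ (m + 1) ^ τ₀))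
      _ ≤ 1 / 2 := hn
  refine ⟨2 * τ, by positivity, ?_⟩
  intro a d ha had ε hε hε1
  have hε2 : (0 : ℝ) < ε ^ 2 := by positivity
  -- identification of the two sets
  have hceq : {k : Fin d → ℕ | k ∈ symIdx a d ∧ ε ^ 2 < ∏ l, Λ (k l)}
      = {k ∈ symIdx a d | ENNReal.ofReal ((ε ^ 2) ^ τ) < ∏ l, g (k l)} := by
    ext k
    have hprod : ∏ l, g (k l) = ENNReal.ofReal ((∏ l, Λ (k l)) ^ τ) := by
      rw [hgdef]
      simp only
      rw [← Real.finset_prod_rpow _ _ (fun i _ => hnn _) τ]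
      exact (ENNReal.ofReal_prod_of_nonneg (fun i _ => Real.rpow_nonneg (hnn _) _)).symm
    simp only [Set.mem_setOf_eq, Set.mem_sep_iff, hprod]
    constructor
    · rintro ⟨h1, h2⟩
      refine ⟨h1, ?_⟩
      rw [ENNReal.ofReal_lt_ofReal_iff_of_nonneg (Real.rpow_nonneg hε2.le _)]
      exact Real.rpow_lt_rpow hε2.le h2 hτpos
    · rintro ⟨h1, h2⟩
      refine ⟨h1, ?_⟩
      rw [ENNReal.ofReal_lt_ofReal_iff_of_nonneg (Real.rpow_nonneg hε2.le _)] at h2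
      by_contra hcon
      push_neg at hcon
      exact absurd h2 (not_lt.mpr (Real.rpow_le_rpow
        (Finset.prod_nonneg fun i _ => hnn _) hcon hτpos.le))
  -- bound for σ₁
  have hσ1 : ∑' m, g (m + 1) ≤ (t : ℝ≥0∞) + 1 := by
    rw [tsum_shift (fun m => g (m + 1)) t]
    have hhead : ∑ i ∈ range t, g (i + 1) ≤ (t : ℝ≥0∞) := by
      calc ∑ i ∈ range t, g (i + 1) ≤ ∑ _i ∈ range t, (1 : ℝ≥0∞) :=
          Finset.sum_le_sum fun i hi => hg1 (i + 1) (by omega)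
            (by simpa [Nat.succ_le_iff] using Finset.mem_range.mp hi)
        _ = (t : ℝ≥0∞) := by simp
    have htail : ∑' m, g ((m + t) + 1) ≤ 1 := by
      refine le_trans (le_of_eq ?_) (le_trans hσ (by norm_num))
      exact tsum_congr fun m => by rw [show m + t + 1 = m + (t + 1) by omega]
    exact add_le_add hhead htail
  -- apply master and cheb
  obtain ⟨M, hMdef⟩ : ∃ M : ℝ≥0∞,
      M = 2 * ((a + (t - 1)).choose (t - 1) : ℝ≥0∞) * ((t : ℝ≥0∞) + 1) ^ (d - a) := ⟨_, rfl⟩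
  have hMne : M ≠ ⊤ := by
    rw [hMdef]
    refine ENNReal.mul_ne_top (ENNReal.mul_ne_top (by simp) (by simp)) ?_
    exact ENNReal.pow_ne_top (by simp [ENNReal.add_ne_top])
  have hbig : ∑' k : Fin d → ℕ, Set.indicator (symIdx a d) (fun k => ∏ l, g (k l)) k ≤ M := by
    refine le_trans (master g t hg1 hσ had) ?_
    rw [hMdef]
    exact mul_le_mul_right (pow_le_pow_left' hσ1 _) _
  have hcne : ENNReal.ofReal ((ε ^ 2) ^ τ) ≠ 0 := by
    simp only [ne_eq, ENNReal.ofReal_eq_zero, not_le]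
    exact Real.rpow_pos_of_pos hε2 τ
  obtain ⟨hfin, hcard⟩ := cheb (symIdx a d) (fun k => ∏ l, g (k l))
    (ENNReal.ofReal ((ε ^ 2) ^ τ)) M hcne hMne hbig
  rw [← hceq] at hfin hcard
  refine ⟨hfin, ?_⟩
  -- convert the ENNReal inequality to ℝ
  set N : ℕ := {k : Fin d → ℕ | k ∈ symIdx a d ∧ ε ^ 2 < ∏ l, Λ (k l)}.ncard with hNdef
  have hreal : (N : ℝ) * (ε ^ 2) ^ τ ≤ M.toReal := by
    have h1 : ((N : ℝ≥0∞) * ENNReal.ofReal ((ε ^ 2) ^ τ)).toReal ≤ M.toReal :=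
      ENNReal.toReal_mono hMne hcard
    rwa [ENNReal.toReal_mul, ENNReal.toReal_natCast,
      ENNReal.toReal_ofReal (Real.rpow_nonneg hε2.le _)] at h1
  have hMto : M.toReal = 2 * ((a + (t - 1)).choose (t - 1) : ℝ) * ((t : ℝ) + 1) ^ (d - a) := by
    rw [hMdef, ENNReal.toReal_mul, ENNReal.toReal_mul, ENNReal.toReal_pow,
      ENNReal.toReal_add (by simp) (by simp)]
    simp
  have hpowp : (ε ^ 2) ^ τ = ε ^ (2 * τ) := by
    rw [Real.rpow_mul hε.le, Real.rpow_two]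
  have hεp : ε ^ (-(2 * τ)) = (ε ^ (2 * τ))⁻¹ := Real.rpow_neg hε.le _
  have hpos : (0 : ℝ) < ε ^ (2 * τ) := Real.rpow_pos_of_pos hε _
  rw [hMto, hpowp] at hreal
  rw [hεp]
  rw [mul_comm (ε ^ (2 * τ))⁻¹ _, ← div_eq_mul_inv]
  exact (le_div_iff₀ hpos).mpr hreal

end Stmt6Aux

/-- Sufficient conditions for (strong) polynomial tractability of symmetric tensor
product problems with respect to the absolute error criterion, assuming `λ ∈ ℓ_{τ₀}`.
Here `b_d = d - a_d` is the number of coordinates without symmetry conditions. -/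
theorem stmt_6
    (Λ : ℕ → ℝ) (hnn : ∀ m, 0 ≤ Λ m)
    (hmono : ∀ m n : ℕ, 1 ≤ m → m ≤ n → Λ n ≤ Λ m) (h2 : 0 < Λ 2)
    (τ₀ : ℝ) (hτ₀ : 0 < τ₀) (hsum : Summable (fun m : ℕ => Λ (m + 1) ^ τ₀))
    (a : ℕ → ℕ) (ha : ∀ d : ℕ, 1 ≤ d → 1 ≤ a d ∧ a d ≤ d) :
    -- (i) λ₁ < 1 implies strong polynomial tractability
    (Λ 1 < 1 →
      ∃ C p : ℝ, 0 < C ∧ 0 < p ∧ ∀ d : ℕ, 1 ≤ d → ∀ ε : ℝ, 0 < ε → ε ≤ 1 →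
        {k : Fin d → ℕ | k ∈ symIdx (a d) d ∧ ε ^ 2 < ∏ l, Λ (k l)}.Finite ∧
        ({k : Fin d → ℕ | k ∈ symIdx (a d) d ∧ ε ^ 2 < ∏ l, Λ (k l)}.ncard : ℝ) ≤
          C * ε ^ (-p)) ∧
    -- (ii) λ₁ = 1 > λ₂ and b_d = O(1) imply strong polynomial tractability
    (Λ 1 = 1 → Λ 2 < 1 → (∃ B : ℕ, ∀ d : ℕ, 1 ≤ d → d - a d ≤ B) →
      ∃ C p : ℝ, 0 < C ∧ 0 < p ∧ ∀ d : ℕ, 1 ≤ d → ∀ ε : ℝ, 0 < ε → ε ≤ 1 →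
        {k : Fin d → ℕ | k ∈ symIdx (a d) d ∧ ε ^ 2 < ∏ l, Λ (k l)}.Finite ∧
        ({k : Fin d → ℕ | k ∈ symIdx (a d) d ∧ ε ^ 2 < ∏ l, Λ (k l)}.ncard : ℝ) ≤
          C * ε ^ (-p)) ∧
    -- (iii) λ₁ = 1 and b_d = O(ln d) imply polynomial tractability
    (Λ 1 = 1 → (∃ c : ℝ, 0 < c ∧ ∀ d : ℕ, 2 ≤ d → ((d - a d : ℕ) : ℝ) ≤ c * Real.log d) →
      ∃ C p q : ℝ, 0 < C ∧ 0 < p ∧ 0 ≤ q ∧ ∀ d : ℕ, 1 ≤ d → ∀ ε : ℝ, 0 < ε → ε ≤ 1 →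
        {k : Fin d → ℕ | k ∈ symIdx (a d) d ∧ ε ^ 2 < ∏ l, Λ (k l)}.Finite ∧
        ({k : Fin d → ℕ | k ∈ symIdx (a d) d ∧ ε ^ 2 < ∏ l, Λ (k l)}.ncard : ℝ) ≤
          C * ε ^ (-p) * (d : ℝ) ^ q) := by
  refine ⟨?_, ?_, ?_⟩
  · -- case (i)
    intro h1
    obtain ⟨p, hp, H⟩ := Stmt6Aux.glue Λ hnn hmono τ₀ hτ₀ hsum 0
      (fun m hm hm' => by omega) (by simpa using h1)
    refine ⟨2, p, by norm_num, hp, ?_⟩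
    intro d hd ε hε hε1
    obtain ⟨ha1, had⟩ := ha d hd
    obtain ⟨hfin, hcard⟩ := H (a d) d ha1 had ε hε hε1
    refine ⟨hfin, le_trans hcard (le_of_eq ?_)⟩
    norm_num
    ring
  · -- case (ii)
    intro h1 h2' ⟨B, hB⟩
    obtain ⟨p, hp, H⟩ := Stmt6Aux.glue Λ hnn hmono τ₀ hτ₀ hsum 1
      (fun m hm hm' => le_of_eq (by rw [show m = 1 by omega, h1])) h2'
    refine ⟨2 * 2 ^ B, p, by positivity, hp, ?_⟩
    intro d hd ε hε hε1
    obtain ⟨ha1, had⟩ := ha d hd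
    obtain ⟨hfin, hcard⟩ := H (a d) d ha1 had ε hε hε1
    refine ⟨hfin, le_trans hcard ?_⟩
    have hch : ((a d + (1 - 1)).choose (1 - 1) : ℝ) = 1 := by norm_num
    have hpow : (((1 : ℕ) : ℝ) + 1) ^ (d - a d) ≤ 2 ^ B := by
      norm_num
      exact pow_le_pow_right₀ one_le_two (hB d hd)
    calc ε ^ (-p) * (2 * ((a d + (1 - 1)).choose (1 - 1) : ℝ) * (((1 : ℕ) : ℝ) + 1) ^ (d - a d))
        ≤ ε ^ (-p) * (2 * 1 * 2 ^ B) := by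
          refine mul_le_mul_of_nonneg_left ?_ (Real.rpow_nonneg hε.le _)
          rw [hch]
          refine mul_le_mul_of_nonneg_left hpow (by norm_num)
      _ = 2 * 2 ^ B * ε ^ (-p) := by ring
  · -- case (iii)
    intro h1 ⟨c, hc0, hclog⟩
    -- find t ≥ 1 with Λ (t+1) < 1
    have htend : Filter.Tendsto (fun m : ℕ => Λ (m + 1) ^ τ₀) Filter.atTop (nhds 0) :=
      hsum.tendsto_atTop_zero
    obtain ⟨m, hm⟩ : ∃ m : ℕ, Λ (m + 1) ^ τ₀ < 1 :=
      (htend.eventually (eventually_lt_nhds (by norm_num : (0:ℝ) < 1))).exists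
    have hΛm : Λ (m + 1) < 1 := by
      by_contra hcon
      push_neg at hcon
      exact absurd hm (not_lt.mpr (Real.one_le_rpow hcon hτ₀.le))
    set t := max m 1 with htdef
    have ht1 : 1 ≤ t := le_max_right m 1
    have hΛt1 : Λ (t + 1) < 1 :=
      lt_of_le_of_lt (hmono (m + 1) (t + 1) (by omega) (by omega : m + 1 ≤ t + 1)) hΛm
    have hle1 : ∀ m', 1 ≤ m' → m' ≤ t → Λ m' ≤ 1 := fun m' hm1 _ => by
      rw [← h1]; exact hmono 1 m' le_rfl hm1
    obtain ⟨p, hp, H⟩ := Stmt6Aux.glue Λ hnn hmono τ₀ hτ₀ hsum t hle1 hΛt1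
    have ht1R : (1 : ℝ) ≤ (t : ℝ) + 1 := by
      have : (0 : ℝ) ≤ (t : ℝ) := Nat.cast_nonneg t
      linarith
    have hlogt : 0 ≤ Real.log ((t : ℝ) + 1) := Real.log_nonneg ht1R
    refine ⟨2 * ((t : ℝ) + 1) ^ t, p, ((t - 1 : ℕ) : ℝ) + c * Real.log ((t : ℝ) + 1),
      by positivity, hp,
      add_nonneg (Nat.cast_nonneg _) (mul_nonneg hc0.le hlogt), ?_⟩
    intro d hd ε hε hε1
    obtain ⟨ha1, had⟩ := ha d hd
    obtain ⟨hfin, hcard⟩ := H (a d) d ha1 had ε hε hε1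
    refine ⟨hfin, le_trans hcard ?_⟩
    set q : ℝ := ((t - 1 : ℕ) : ℝ) + c * Real.log ((t : ℝ) + 1) with hqdef
    suffices hkey : 2 * ((a d + (t - 1)).choose (t - 1) : ℝ) * ((t : ℝ) + 1) ^ (d - a d)
        ≤ 2 * ((t : ℝ) + 1) ^ t * (d : ℝ) ^ q by
      calc ε ^ (-p) * (2 * ((a d + (t - 1)).choose (t - 1) : ℝ) * ((t : ℝ) + 1) ^ (d - a d))
          ≤ ε ^ (-p) * (2 * ((t : ℝ) + 1) ^ t * (d : ℝ) ^ q) :=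
            mul_le_mul_of_nonneg_left hkey (Real.rpow_nonneg hε.le _)
        _ = 2 * ((t : ℝ) + 1) ^ t * ε ^ (-p) * (d : ℝ) ^ q := by ring
    rcases eq_or_lt_of_le hd with hd1 | hd2
    · -- d = 1
      have hdeq : d = 1 := hd1.symm
      have haeq : a d = 1 := by omega
      have hb0 : d - a d = 0 := by omega
      have hch : (a d + (t - 1)).choose (t - 1) = t := by
        rw [haeq, show 1 + (t - 1) = t by omega]
        rw [show t - 1 = t - 1 from rfl]
        calc t.choose (t - 1) = t.choose 1 := Nat.choose_symm ht1
          _ = t := Nat.choose_one_right t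
      rw [hch, hb0, hdeq]
      have h1q : (1 : ℝ) ^ q = 1 := Real.one_rpow q
      have htle : (t : ℝ) ≤ ((t : ℝ) + 1) ^ t := by
        calc (t : ℝ) ≤ (t : ℝ) + 1 := by linarith
          _ ≤ ((t : ℝ) + 1) ^ t := le_self_pow₀ ht1R (by omega)
      rw [pow_zero, mul_one]
      push_cast
      rw [h1q, mul_one]
      nlinarith
    · -- 2 ≤ d
      have hd2' : 2 ≤ d := hd2
      have hdR1 : (1 : ℝ) ≤ (d : ℝ) := by exact_mod_cast Nat.one_le_of_lt hd2'
      have hdRpos : (0 : ℝ) < (d : ℝ) := by linarith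
      have hlog := hclog d hd2'
      -- bound the binomial coefficient
      have hchn : (a d + (t - 1)).choose (t - 1) ≤ ((t + 1) * d) ^ (t - 1) := by
        have h1 : a d + (t - 1) ≤ (t + 1) * d := by
          have h2 : t - 1 ≤ (t - 1) * d := Nat.le_mul_of_pos_right _ (by omega)
          have h3 : a d + (t - 1) ≤ d + (t - 1) * d := add_le_add had h2
          have h4 : d + (t - 1) * d = t * d := by
            calc d + (t - 1) * d = (t - 1 + 1) * d := by ring
              _ = t * d := by rw [show t - 1 + 1 = t by omega]
          have h5 : t * d ≤ (t + 1) * d := Nat.mul_le_mul_right d (by omega)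
          omega
        calc (a d + (t - 1)).choose (t - 1) ≤ (a d + (t - 1)) ^ (t - 1) :=
            Nat.choose_le_pow _ _
          _ ≤ ((t + 1) * d) ^ (t - 1) := Nat.pow_le_pow_left h1 _
      have hch : ((a d + (t - 1)).choose (t - 1) : ℝ)
          ≤ ((t : ℝ) + 1) ^ (t - 1) * (d : ℝ) ^ (((t - 1 : ℕ) : ℝ)) := by
        rw [Real.rpow_natCast]
        calc ((a d + (t - 1)).choose (t - 1) : ℝ)
            ≤ ((((t + 1) * d) ^ (t - 1) : ℕ) : ℝ) := by exact_mod_cast hchn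
          _ = ((t : ℝ) + 1) ^ (t - 1) * (d : ℝ) ^ (t - 1) := by push_cast [mul_pow]; ring
      -- bound the (t+1)-power
      have hpow : ((t : ℝ) + 1) ^ (d - a d) ≤ (d : ℝ) ^ (c * Real.log ((t : ℝ) + 1)) := by
        have htpos : (0 : ℝ) < (t : ℝ) + 1 := by linarith
        rw [← Real.rpow_natCast ((t : ℝ) + 1) (d - a d), Real.rpow_def_of_pos htpos,
          Real.rpow_def_of_pos hdRpos]
        refine Real.exp_le_exp.mpr ?_
        calc Real.log ((t : ℝ) + 1) * ((d - a d : ℕ) : ℝ)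
            ≤ Real.log ((t : ℝ) + 1) * (c * Real.log d) :=
              mul_le_mul_of_nonneg_left hlog hlogt
          _ = Real.log d * (c * Real.log ((t : ℝ) + 1)) := by ring
      calc 2 * ((a d + (t - 1)).choose (t - 1) : ℝ) * ((t : ℝ) + 1) ^ (d - a d)
          ≤ 2 * (((t : ℝ) + 1) ^ (t - 1) * (d : ℝ) ^ (((t - 1 : ℕ) : ℝ))) *
              ((d : ℝ) ^ (c * Real.log ((t : ℝ) + 1))) := by
            refine mul_le_mul (mul_le_mul_of_nonneg_left hch (by norm_num)) hpow
              (by positivity) (by positivity)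
        _ = 2 * ((t : ℝ) + 1) ^ (t - 1) * (d : ℝ) ^ q := by
            rw [hqdef, Real.rpow_add hdRpos]; ring
        _ ≤ 2 * ((t : ℝ) + 1) ^ t * (d : ℝ) ^ q := by
            refine mul_le_mul_of_nonneg_right ?_ (Real.rpow_nonneg hdRpos.le _)
            refine mul_le_mul_of_nonneg_left ?_ (by norm_num)
            exact pow_le_pow_right₀ ht1R (Nat.sub_le t 1)
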